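/- Let d > 0 and let X be a nonnegative real random variable with E[X] = d and Var(X) ≤ d. Then E[sqrt(X)] ≥ sqrt(d) − 1/(2·sqrt(d)). -/

import Mathlib

open MeasureTheory ProbabilityTheory

lemma stmt12_aux (d x : ℝ) (hd : 0 < d) (hx : 0 ≤ x) :
    Real.sqrt d + (x - d)/(2*Real.sqrt d) - (x - d)^2/(2*d*Real.sqrt d) ≤ Real.sqrt x := by
  have hsd : 0 < Real.sqrt d := Real.sqrt_pos.2 hd
  have hs : 0 ≤ Real.sqrt x := Real.sqrt_nonneg x
  have hs2 : Real.sqrt x ^ 2 = x := Real.sq_sqrt hx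
  have hsd2 : Real.sqrt d ^ 2 = d := Real.sq_sqrt hd.le
  have key : Real.sqrt d + (x - d)/(2*Real.sqrt d) - (x - d)^2/(2*d*Real.sqrt d)
      = Real.sqrt d + ((x-d)*d - (x-d)^2)/(2*d*Real.sqrt d) := by
    field_simp
    ring
  rw [key, add_comm, ← le_sub_iff_add_le,
    div_le_iff₀ (by positivity : (0:ℝ) < 2*d*Real.sqrt d)]
  nlinarith [mul_nonneg (mul_nonneg hs (sq_nonneg (Real.sqrt x - Real.sqrt d)))
      (by positivity : (0:ℝ) ≤ Real.sqrt x + 2*Real.sqrt d)]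

/-- If `X` is a nonnegative real random variable with `𝔼[X] = d > 0` and
`Var(X) ≤ d`, then `𝔼[√X] ≥ √d - 1/(2·√d)`. -/
theorem stmt12 {Ω : Type*} [MeasurableSpace Ω] (μ : Measure Ω) [IsProbabilityMeasure μ]
    (d : ℝ) (hd : 0 < d)
    (X : Ω → ℝ) (hXnn : ∀ ω, 0 ≤ X ω) (hX2 : MemLp X 2 μ)
    (hmean : ∫ ω, X ω ∂μ = d) (hvar : variance X μ ≤ d) :
    Real.sqrt d - 1 / (2 * Real.sqrt d) ≤ ∫ ω, Real.sqrt (X ω) ∂μ := by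
  have hsd : 0 < Real.sqrt d := Real.sqrt_pos.2 hd
  have hXint : Integrable X μ := hX2.integrable (by norm_num)
  have h1 : Integrable (fun ω => X ω - d) μ := hXint.sub (integrable_const d)
  have hX2' : MemLp (fun ω => X ω - d) 2 μ := hX2.sub (memLp_const d)
  have h2 : Integrable (fun ω => (X ω - d)^2) μ := by
    have := hX2'.integrable_sq
    simpa [pow_two] using this
  have hsqint : Integrable (fun ω => Real.sqrt (X ω)) μ := by
    have hmeas : AEStronglyMeasurable (fun ω => Real.sqrt (X ω)) μ :=
      Real.continuous_sqrt.comp_aestronglyMeasurable hX2.aestronglyMeasurable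
    refine ((integrable_const (1:ℝ)).add hXint).mono hmeas ?_
    filter_upwards with ω
    rw [Real.norm_of_nonneg (Real.sqrt_nonneg _)]
    have h1' : Real.sqrt (X ω) ≤ (1 + X ω)/2 := by
      nlinarith [Real.sq_sqrt (hXnn ω), Real.sqrt_nonneg (X ω), sq_nonneg (Real.sqrt (X ω) - 1)]
    have : (1 + X ω)/2 ≤ |1 + X ω| := by
      have := le_abs_self (1 + X ω); have := hXnn ω; linarith
    calc Real.sqrt (X ω) ≤ (1 + X ω)/2 := h1'
      _ ≤ ‖1 + X ω‖ := by rwa [Real.norm_eq_abs]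
  have hgint : Integrable (fun ω => Real.sqrt d + (X ω - d)/(2*Real.sqrt d)
      - (X ω - d)^2/(2*d*Real.sqrt d)) μ :=
    ((integrable_const _).add (h1.div_const _)).sub (h2.div_const _)
  have hmono : ∫ ω, (Real.sqrt d + (X ω - d)/(2*Real.sqrt d)
      - (X ω - d)^2/(2*d*Real.sqrt d)) ∂μ ≤ ∫ ω, Real.sqrt (X ω) ∂μ := by
    refine integral_mono hgint hsqint fun ω => ?_
    exact stmt12_aux d (X ω) hd (hXnn ω)
  have hvar_eq : variance X μ = ∫ ω, (X ω - d)^2 ∂μ := by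
    have := variance_eq_integral hX2.aestronglyMeasurable.aemeasurable
    rw [this, hmean]
  have ha : Integrable (fun ω => Real.sqrt d + (X ω - d)/(2*Real.sqrt d)) μ :=
    (integrable_const _).add (h1.div_const _)
  have hb : Integrable (fun ω => (X ω - d)/(2*Real.sqrt d)) μ := h1.div_const _
  have hc : Integrable (fun ω => (X ω - d)^2/(2*d*Real.sqrt d)) μ := h2.div_const _
  have hcalc : ∫ ω, (Real.sqrt d + (X ω - d)/(2*Real.sqrt d)
      - (X ω - d)^2/(2*d*Real.sqrt d)) ∂μ
      = Real.sqrt d + (∫ ω, (X ω - d) ∂μ)/(2*Real.sqrt d)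
        - (∫ ω, (X ω - d)^2 ∂μ)/(2*d*Real.sqrt d) := by
    rw [integral_sub ha hc, integral_add (integrable_const _) hb, integral_const,
      integral_div, integral_div]
    simp
  have hmean0 : ∫ ω, (X ω - d) ∂μ = 0 := by
    rw [integral_sub hXint (integrable_const d), hmean, integral_const]
    simp
  have hvle : (∫ ω, (X ω - d)^2 ∂μ)/(2*d*Real.sqrt d) ≤ 1/(2*Real.sqrt d) := by
    rw [← hvar_eq]
    rw [div_le_div_iff₀ (by positivity) (by positivity)]
    nlinarith [hvar, hsd, hd]
  calc Real.sqrt d - 1/(2*Real.sqrt d)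
      ≤ Real.sqrt d - (∫ ω, (X ω - d)^2 ∂μ)/(2*d*Real.sqrt d) := by linarith
    _ = ∫ ω, (Real.sqrt d + (X ω - d)/(2*Real.sqrt d)
        - (X ω - d)^2/(2*d*Real.sqrt d)) ∂μ := by rw [hcalc, hmean0]; simp
    _ ≤ ∫ ω, Real.sqrt (X ω) ∂μ := hmono
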